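/- For every set x with a distinguished element z, there is a finite-to-one map from the set of injective finite sequences over x into the set of finitary permutations of x, and an injection from the injective finite sequences over x into ω × S_fin(x). Concretely, map t to the cycle (t(0); …; t(n−1)) if z ∈ ran(t), and to the cycle (t(0); …; t(n−1); z) otherwise. -/

import Mathlib

open List

section helpers
variable {α : Type*} [DecidableEq α] {z : α}

omit [DecidableEq α] in
private lemma rot_cons_eq {t t' : List α}
    (hnd : (z :: t).Nodup) (h : (z :: t) ~r (z :: t')) : t = t' := by
  obtain ⟨n, hn⟩ := h
  rw [← List.rotate_mod] at hn
  set m := n % (z :: t).length with hm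
  have hlt : m < (z :: t).length := Nat.mod_lt _ (by simp)
  have h0 : ((z :: t).rotate m).get ⟨0, by rw [hn]; simp⟩ =
      (z :: t).get ⟨(0 + m) % (z :: t).length, Nat.mod_lt _ (by simp)⟩ :=
    List.get_rotate _ _ _
  have hz : (z :: t).get ⟨(0 + m) % (z :: t).length, Nat.mod_lt _ (by simp)⟩ = z := by
    rw [← h0]; simp [hn]
  have : ((0 + m) % (z :: t).length : ℕ) = 0 := by
    have := (List.Nodup.get_inj_iff hnd).mp
      (by rw [hz]; rfl :
        (z :: t).get ⟨(0 + m) % (z :: t).length, Nat.mod_lt _ (by simp)⟩ =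
        (z :: t).get ⟨0, by simp⟩)
    simpa using congrArg Fin.val this
  rw [Nat.zero_add, Nat.mod_eq_of_lt hlt] at this
  rw [this, List.rotate_zero] at hn
  exact (List.cons_injective.eq_iff.mp hn)

/-- Rotating a list containing `z` by `indexOf z` puts `z` at the front. -/
private lemma rot_idx_cons {m : List α} (hz : z ∈ m) :
    m.rotate (m.idxOf z) = z :: (m.rotate (m.idxOf z)).tail := by
  have hne : m ≠ [] := ne_nil_of_mem hz
  have hlen : 0 < (m.rotate (m.idxOf z)).length := by
    simpa using length_pos_of_mem hz
  have hrne : m.rotate (m.idxOf z) ≠ [] := by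
    intro h; rw [h] at hlen; simp at hlen
  have hk : m.idxOf z < m.length := idxOf_lt_length_iff.mpr hz
  have hget : (m.rotate (m.idxOf z)).get ⟨0, hlen⟩ =
      m.get ⟨(0 + m.idxOf z) % m.length, Nat.mod_lt _ (length_pos_of_mem hz)⟩ :=
    List.get_rotate _ _ _
  have hz0 : (m.rotate (m.idxOf z)).get ⟨0, hlen⟩ = z := by
    rw [hget]
    have : ((0 + m.idxOf z) % m.length : ℕ) = m.idxOf z := by
      rw [Nat.zero_add, Nat.mod_eq_of_lt hk]
    simp only [this]
    exact List.idxOf_get hk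
  conv_lhs => rw [← List.cons_head_tail hrne]
  congr 1
  have hh : (m.rotate (m.idxOf z)).head hrne = (m.rotate (m.idxOf z)).get ⟨0, hlen⟩ :=
    (List.get_mk_zero hlen).symm
  rw [hh]; exact hz0

end helpers

theorem injective_seq_into_finitary_perms {x : Type*} (z : x) :
    (∃ F : {l : List x // l.Nodup} → {p : Equiv.Perm x // {v | p v ≠ v}.Finite},
        ∀ p, (F ⁻¹' {p}).Finite) ∧
    (∃ G : {l : List x // l.Nodup} → ℕ × {p : Equiv.Perm x // {v | p v ≠ v}.Finite},
        Function.Injective G) := by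
  classical
  -- the list `L l`: append `z` if it is not present
  set L : {l : List x // l.Nodup} → List x :=
    fun l => if z ∈ l.1 then l.1 else l.1 ++ [z] with hL
  have hLnd : ∀ l, (L l).Nodup := by
    intro l
    by_cases h : z ∈ l.1
    · simpa [hL, h] using l.2
    · simp only [hL, if_neg h]
      exact List.Nodup.append l.2 (List.nodup_singleton z) (by simp [h])
  have hzL : ∀ l, z ∈ L l := by
    intro l; by_cases h : z ∈ l.1 <;> simp [hL, h]
  have hsubL : ∀ l, ∀ a ∈ l.1, a ∈ L l := by
    intro l a ha; by_cases h : z ∈ l.1 <;> simp [hL, h, ha]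
  have hfin : ∀ m : List x, {v | m.formPerm v ≠ v}.Finite := by
    intro m
    exact Set.Finite.subset m.toFinset.finite_toSet (List.support_formPerm_le' m)
  -- elements of `l` are moved by `formPerm (L l)` unless `l` is trivial
  have hmoves : ∀ l : {l : List x // l.Nodup}, l.1 ≠ [] → l.1 ≠ [z] →
      ∀ a ∈ l.1, (L l).formPerm a ≠ a := by
    intro l hne hnz a ha
    have h2 : ∀ b : x, L l ≠ [b] := by
      intro b hb
      by_cases h : z ∈ l.1
      · simp only [hL, if_pos h] at hb
        rw [hb] at h
        simp at h
        exact hnz (by rw [hb, h])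
      · simp only [hL, if_neg h] at hb
        have hlb : (l.1 ++ [z]).length = 1 := by rw [hb]; rfl
        simp only [List.length_append, List.length_singleton] at hlb
        have : l.1 = [] := List.length_eq_zero_iff.mp (by omega)
        exact hne this
    have := List.support_formPerm_of_nodup' (L l) (hLnd l) h2
    have haL : a ∈ (L l).toFinset := by
      simp only [List.mem_toFinset]; exact hsubL l a ha
    have : a ∈ {v | (L l).formPerm v ≠ v} := by
      rw [this]; exact_mod_cast haL
    exact this
  constructor
  · -- finite-to-one map
    refine ⟨fun l => ⟨(L l).formPerm, hfin _⟩, ?_⟩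
    intro p
    set T : Set x := {v | p.1 v ≠ v} ∪ {z} with hT
    have hTfin : T.Finite := p.2.union (Set.finite_singleton z)
    haveI : Finite ↥T := hTfin.to_subtype
    set n := hTfin.toFinset.card with hn
    set A : Set (List x) := {m | (∀ a ∈ m, a ∈ T) ∧ m.length ≤ n} with hA
    have hAfin : A.Finite := by
      refine ((List.finite_length_le ↥T n).image (List.map Subtype.val)).subset ?_
      rintro m ⟨hmT, hml⟩
      refine ⟨m.attach.map (fun a => (⟨a.1, hmT a.1 a.2⟩ : ↥T)), by simpa, ?_⟩
      rw [List.map_map]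
      exact List.attach_map_subtype_val m
    refine (hAfin.preimage (Set.injOn_of_injective Subtype.val_injective)).subset ?_
    intro l hl
    simp only [Set.mem_preimage, Set.mem_singleton_iff] at hl
    have hp : (L l).formPerm = p.1 := congrArg Subtype.val hl
    by_cases htriv : l.1 = [] ∨ l.1 = [z]
    · rcases htriv with h | h
      · refine ⟨?_, ?_⟩
        · intro a ha; rw [h] at ha; simp at ha
        · rw [h]; simp
      · refine ⟨?_, ?_⟩
        · intro a ha; rw [h] at ha; simp only [List.mem_singleton] at ha
          subst ha; exact Or.inr rfl
        · rw [h]; simp only [List.length_singleton]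
          have hzT : z ∈ hTfin.toFinset := by
            rw [Set.Finite.mem_toFinset]; exact Or.inr rfl
          exact Finset.card_pos.mpr ⟨z, hzT⟩
    · push_neg at htriv
      have hmem : ∀ a ∈ l.1, a ∈ T := by
        intro a ha
        have := hmoves l htriv.1 htriv.2 a ha
        rw [hp] at this
        exact Or.inl this
      refine ⟨hmem, ?_⟩
      have hnd := l.2
      have hcard : l.1.toFinset.card = l.1.length := List.toFinset_card_of_nodup hnd
      have hsub : l.1.toFinset ⊆ hTfin.toFinset := by
        intro a ha
        rw [Set.Finite.mem_toFinset]
        exact hmem a (List.mem_toFinset.mp ha)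
      calc l.1.length = l.1.toFinset.card := hcard.symm
        _ ≤ n := Finset.card_le_card hsub
  · -- injection into ℕ × finitary perms
    set k : {l : List x // l.Nodup} → ℕ := fun l => (L l).idxOf z with hk
    set r : {l : List x // l.Nodup} → List x := fun l => (L l).rotate (k l) with hr
    have hrz : ∀ l, r l = z :: (r l).tail := fun l => rot_idx_cons (hzL l)
    have hrnd : ∀ l, (r l).Nodup := fun l => (List.nodup_rotate).mpr (hLnd l)
    refine ⟨fun l => (if z ∈ l.1 then 2 * k l else 2 * k l + 1, ⟨(r l).formPerm, hfin _⟩), ?_⟩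
    intro l1 l2 h
    obtain ⟨h1, h2⟩ := Prod.mk.injEq _ _ _ _ ▸ h
    have hperm : (r l1).formPerm = (r l2).formPerm := congrArg Subtype.val h2
    -- same case and same index
    have hcase : (z ∈ l1.1 ↔ z ∈ l2.1) ∧ k l1 = k l2 := by
      by_cases c1 : z ∈ l1.1 <;> by_cases c2 : z ∈ l2.1
      · rw [if_pos c1, if_pos c2] at h1; exact ⟨by simp [c1, c2], by omega⟩
      · rw [if_pos c1, if_neg c2] at h1; omega
      · rw [if_neg c1, if_pos c2] at h1; omega
      · rw [if_neg c1, if_neg c2] at h1; exact ⟨by simp [c1, c2], by omega⟩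
    -- r l1 = r l2
    have hreq : r l1 = r l2 := by
      rcases (List.formPerm_eq_formPerm_iff (hrnd l1) (hrnd l2)).mp hperm with hrot | ⟨hl1, hl2⟩
      · rw [hrz l1, hrz l2]
        congr 1
        exact rot_cons_eq (by rw [← hrz l1]; exact hrnd l1) (by rw [← hrz l1, ← hrz l2]; exact hrot)
      · have e1 : r l1 = [z] := by
          have := hrz l1
          rcases htail : (r l1).tail with _ | ⟨a, t⟩
          · rw [this, htail]
          · rw [this, htail] at hl1; simp at hl1
        have e2 : r l2 = [z] := by
          have := hrz l2
          rcases htail : (r l2).tail with _ | ⟨a, t⟩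
          · rw [this, htail]
          · rw [this, htail] at hl2; simp at hl2
        rw [e1, e2]
    -- recover L
    have hklt : ∀ l, k l ≤ (L l).length :=
      fun l => le_of_lt (List.idxOf_lt_length_iff.mpr (hzL l))
    have hLrec : ∀ l, L l = (r l).rotate ((L l).length - k l) := by
      intro l
      rw [hr]
      simp only
      rw [List.rotate_rotate, Nat.add_sub_cancel' (hklt l), List.rotate_length]
    have hlen : (L l1).length = (L l2).length := by
      have : (r l1).length = (r l2).length := by rw [hreq]
      simpa [hr] using this
    have hLeq : L l1 = L l2 := by
      rw [hLrec l1, hLrec l2, hreq, hcase.2, hlen]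
    -- recover l
    apply Subtype.ext
    by_cases c1 : z ∈ l1.1
    · have c2 : z ∈ l2.1 := hcase.1.mp c1
      simpa [hL, c1, c2] using hLeq
    · have c2 : z ∉ l2.1 := fun h => c1 (hcase.1.mpr h)
      simp only [hL, if_neg c1, if_neg c2] at hLeq
      have := congrArg List.dropLast hLeq
      simpa [List.dropLast_concat] using this
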